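/- arXiv:2405.15759 — 2 statements merged into one kernel-verified Lean document; each statement's English description precedes it below -/
import Mathlib

section
/- Let P₊ be any positive root system for the finite type A_{e-1} root system Φ^fin, with P₋ = −P₊. Then there exists a convex preorder ≽ on the affine positive roots Φ₊ of type A_{e-1}^{(1)} such that Φ_{≻δ} = {β ∈ Φ₊ : p(β) ∈ P₊} and Φ_{≺δ} = {β ∈ Φ₊ : p(β) ∈ P₋}, where p: ℤI → ℤI/ℤδ is reduction modulo the null root δ. -/
/-- The positive root `α(t,L) = α_{t̄} + ⋯ + α_{t̄+L-1}` of affine type `A_{e-1}^{(1)}`,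
as an element of the root lattice `ZMod e → ℤ`. -/
def alphaRoot (e : ℕ) (t : ℤ) (L : ℕ) : ZMod e → ℤ := fun j =>
  (((Finset.range L).filter (fun k : ℕ => ((t + (k : ℤ) : ℤ) : ZMod e) = j)).card : ℤ)

/-- The null root `δ = α_0 + α_1 + ⋯ + α_{e-1}`. -/
def deltaRoot (e : ℕ) : ZMod e → ℤ := fun _ => 1

/-- The set `Φ₊` of positive roots of affine type `A_{e-1}^{(1)}`. -/
def PhiPos (e : ℕ) : Set (ZMod e → ℤ) :=
  {β | ∃ t : ℤ, ∃ L : ℕ, 0 < L ∧ β = alphaRoot e t L}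

/-- Imaginary roots: positive multiples of the null root `δ`. -/
def ImaginaryRoot (e : ℕ) (β : ZMod e → ℤ) : Prop :=
  ∃ m : ℕ, 0 < m ∧ β = fun _ => (m : ℤ)

/-- A convex preorder on `Φ₊`: reflexive, transitive, total, convex, and with mutual
comparability exactly for equal or both-imaginary roots. -/
structure ConvexPreorderOn (e : ℕ) where
  rel : (ZMod e → ℤ) → (ZMod e → ℤ) → Prop
  refl : ∀ β ∈ PhiPos e, rel β β
  trans : ∀ β γ ν, β ∈ PhiPos e → γ ∈ PhiPos e → ν ∈ PhiPos e →
    rel β γ → rel γ ν → rel β ν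
  total : ∀ β γ, β ∈ PhiPos e → γ ∈ PhiPos e → rel β γ ∨ rel γ β
  convex : ∀ β γ, β ∈ PhiPos e → γ ∈ PhiPos e → rel β γ → β + γ ∈ PhiPos e →
    rel β (β + γ) ∧ rel (β + γ) γ
  imag_equiv : ∀ β γ, β ∈ PhiPos e → γ ∈ PhiPos e →
    ((rel β γ ∧ rel γ β) ↔ (β = γ ∨ (ImaginaryRoot e β ∧ ImaginaryRoot e γ)))

/-- The strict relation `β ≻ γ` associated to a convex preorder. -/
def GtRel {e : ℕ} (P : ConvexPreorderOn e) (β γ : ZMod e → ℤ) : Prop :=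
  P.rel β γ ∧ ¬ P.rel γ β

/-- Reduction mod `δ`: `p(β) = β − β(0)·δ`, identifying `ℤI/ℤδ` with the functions
vanishing at `0`. -/
def pFin (e : ℕ) (β : ZMod e → ℤ) : ZMod e → ℤ :=
  β - (fun _ => β 0)

/-- The finite type `A_{e-1}` root system
`Φ^fin = {±α(t,L) : t ∈ [1,e−1], L ∈ [1, e−t]}`. -/
def PhiFin (e : ℕ) : Set (ZMod e → ℤ) :=
  {β | ∃ t L : ℕ, 1 ≤ t ∧ t ≤ e - 1 ∧ 1 ≤ L ∧ L ≤ e - t ∧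
    (β = alphaRoot e (t : ℤ) L ∨ β = -alphaRoot e (t : ℤ) L)}

section Roots
variable (e : ℕ)

/-- Indicator vector of a single index. -/
def chiV (s : ZMod e) : ZMod e → ℤ := fun j => if s = j then 1 else 0

/-- The "epsilon-coordinates" map: `(Ew β) i = β i - β (i-1)`. -/
def Ew (β : ZMod e → ℤ) : ZMod e → ℤ := fun i => β i - β (i - 1)

lemma Ew_add (β γ : ZMod e → ℤ) : Ew e (β + γ) = Ew e β + Ew e γ := by
  funext i; simp [Ew]; ring

lemma Ew_neg (β : ZMod e → ℤ) : Ew e (-β) = -Ew e β := by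
  funext i; simp [Ew]; ring

lemma Ew_const (m : ℤ) : Ew e (fun _ => m) = 0 := by
  funext i; simp [Ew]

lemma Ew_pFin (β : ZMod e → ℤ) : Ew e (pFin e β) = Ew e β := by
  funext i; simp [Ew, pFin]

lemma pFin_zero_apply (β : ZMod e → ℤ) : pFin e β 0 = 0 := by simp [pFin]

lemma alphaRoot_zero (t : ℤ) : alphaRoot e t 0 = 0 := by
  funext j; simp [alphaRoot]

lemma alphaRoot_succ (t : ℤ) (L : ℕ) :
    alphaRoot e t (L + 1) = alphaRoot e t L + chiV e ((t + L : ℤ) : ZMod e) := by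
  funext j
  simp only [alphaRoot, Finset.range_add_one, Finset.filter_insert, Pi.add_apply, chiV]
  by_cases h : (((t + (L : ℤ)) : ℤ) : ZMod e) = j
  · rw [if_pos h, if_pos h, Finset.card_insert_of_notMem (by simp)]
    push_cast; ring
  · rw [if_neg h, if_neg h]; ring

lemma alphaRoot_congr {t t' : ℤ} (h : ((t : ℤ) : ZMod e) = ((t' : ℤ) : ZMod e)) (L : ℕ) :
    alphaRoot e t L = alphaRoot e t' L := by
  funext j
  simp only [alphaRoot]
  congr 2
  apply Finset.filter_congr
  intro k _
  constructor <;> intro hk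
  · rw [← hk]; push_cast; rw [h]
  · rw [← hk]; push_cast; rw [h]

lemma alphaRoot_add (t : ℤ) (L L' : ℕ) :
    alphaRoot e t (L + L') = alphaRoot e t L + alphaRoot e (t + L) L' := by
  induction L' with
  | zero => simp [alphaRoot_zero]
  | succ n ih =>
    have h1 : L + (n + 1) = (L + n) + 1 := by ring
    rw [h1, alphaRoot_succ, ih, alphaRoot_succ]
    have : ((t + (L + n : ℕ) : ℤ) : ZMod e) = ((t + (L:ℕ) + (n:ℕ) : ℤ) : ZMod e) := by
      push_cast; ring_nf
    rw [this]
    abel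

variable [NeZero e]

lemma alphaRoot_e (t : ℤ) : alphaRoot e t e = deltaRoot e := by
  funext j
  have hcard : ((Finset.range e).filter
      (fun k : ℕ => ((t + (k : ℤ) : ℤ) : ZMod e) = j)).card = 1 := by
    have : ((Finset.range e).filter (fun k : ℕ => ((t + (k : ℤ) : ℤ) : ZMod e) = j))
        = {(j - (t : ZMod e)).val} := by
      ext k
      simp only [Finset.mem_filter, Finset.mem_range, Finset.mem_singleton]
      constructor
      · rintro ⟨hk, hkj⟩
        have h1 : ((k : ℕ) : ZMod e) = j - (t : ZMod e) := by
          have : ((t : ZMod e) + (k : ℕ)) = j := by push_cast at hkj ⊢; exact hkj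
          linear_combination this
        rw [← h1, ZMod.val_natCast, Nat.mod_eq_of_lt hk]
      · rintro rfl
        refine ⟨ZMod.val_lt _, ?_⟩
        push_cast
        rw [ZMod.natCast_val, ZMod.cast_id]
        ring
    rw [this, Finset.card_singleton]
  simp only [alphaRoot, deltaRoot, hcard, Nat.cast_one]

lemma alphaRoot_mul_e (t : ℤ) (q : ℕ) :
    alphaRoot e t (q * e) = fun _ => (q : ℤ) := by
  induction q with
  | zero => funext j; simp [alphaRoot_zero]
  | succ n ih =>
    have h1 : (n + 1) * e = n * e + e := by ring
    rw [h1, alphaRoot_add, ih, alphaRoot_e]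
    funext j
    simp [deltaRoot]

lemma alphaRoot_decomp (t : ℤ) (L : ℕ) :
    alphaRoot e t L = (fun _ => ((L / e : ℕ) : ℤ)) + alphaRoot e t (L % e) := by
  conv_lhs => rw [← Nat.div_add_mod L e]
  rw [Nat.mul_comm e (L / e), alphaRoot_add, alphaRoot_mul_e]
  congr 1
  apply alphaRoot_congr
  push_cast
  simp [ZMod.natCast_self]

lemma Ew_chiV (s : ZMod e) : Ew e (chiV e s) = chiV e s - chiV e (s + 1) := by
  funext i
  simp only [Ew, chiV, Pi.sub_apply]
  congr 1
  by_cases h : s = i - 1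
  · rw [if_pos h, if_pos (by rw [h]; ring)]
  · rw [if_neg h, if_neg (fun hc => h (by rw [← hc]; ring))]

lemma Ew_alpha (t : ℤ) (L : ℕ) :
    Ew e (alphaRoot e t L) = chiV e ((t : ℤ) : ZMod e) - chiV e ((t + L : ℤ) : ZMod e) := by
  induction L with
  | zero =>
    rw [alphaRoot_zero]
    have : ((t + (0:ℕ) : ℤ) : ZMod e) = ((t : ℤ) : ZMod e) := by push_cast; ring_nf
    rw [this]
    funext i; simp [Ew]
  | succ n ih =>
    rw [alphaRoot_succ, Ew_add, ih, Ew_chiV]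
    have : ((t + (n:ℕ) : ℤ) : ZMod e) + 1 = ((t + (n+1:ℕ) : ℤ) : ZMod e) := by
      push_cast; ring
    rw [this]
    abel

/-- Height of a root. -/
def htV (β : ZMod e → ℤ) : ℤ := ∑ j, β j

lemma htV_add (β γ : ZMod e → ℤ) : htV e (β + γ) = htV e β + htV e γ := by
  simp [htV, Finset.sum_add_distrib]

lemma htV_alpha (t : ℤ) (L : ℕ) : htV e (alphaRoot e t L) = L := by
  simp only [htV, alphaRoot]
  norm_cast
  conv_rhs => rw [← Finset.card_range L]
  exact (Finset.card_eq_sum_card_fiberwise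
    (f := fun k : ℕ => ((t + (k:ℤ) : ℤ) : ZMod e)) (t := Finset.univ)
    (fun x _ => Finset.mem_univ _)).symm

lemma htV_pos {β : ZMod e → ℤ} (hβ : β ∈ PhiPos e) : 0 < htV e β := by
  obtain ⟨t, L, hL, rfl⟩ := hβ
  rw [htV_alpha]
  exact_mod_cast hL

/-- Kernel of `Ew`: constants. -/
lemma Ew_eq_zero_const {β : ZMod e → ℤ} (h : Ew e β = 0) : ∀ i, β i = β 0 := by
  have key : ∀ m : ℕ, β ((m : ℕ) : ZMod e) = β 0 := by
    intro m
    induction m with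
    | zero => norm_cast
    | succ n ih =>
      have h1 := congrFun h (((n+1 : ℕ) : ZMod e))
      simp only [Ew, Pi.zero_apply] at h1
      have h2 : ((n+1 : ℕ) : ZMod e) - 1 = ((n : ℕ) : ZMod e) := by push_cast; ring
      rw [h2] at h1
      omega
  intro i
  have : ((i.val : ℕ) : ZMod e) = i := by simp [ZMod.natCast_val, ZMod.cast_id]
  rw [← this]
  exact key i.val

lemma eq_of_Ew_eq_zero_apply {β γ : ZMod e → ℤ} (hE : Ew e β = Ew e γ) (h0 : β 0 = γ 0) :
    β = γ := by
  have h : Ew e (β - γ) = 0 := by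
    funext i; have := congrFun hE i; simp [Ew] at this ⊢; omega
  have := Ew_eq_zero_const e h
  funext i
  have hi := this i
  simp only [Pi.sub_apply, h0] at hi
  omega

lemma eq_of_Ew_eq_ht_eq {β γ : ZMod e → ℤ} (hE : Ew e β = Ew e γ) (hh : htV e β = htV e γ) :
    β = γ := by
  have h : Ew e (β - γ) = 0 := by
    funext i; have := congrFun hE i; simp [Ew] at this ⊢; omega
  have hc := Ew_eq_zero_const e h
  have hsum : htV e β - htV e γ = (e : ℤ) * (β 0 - γ 0) := by
    have : htV e β - htV e γ = ∑ j : ZMod e, (β - γ) j := by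
      simp [htV, Finset.sum_sub_distrib]
    rw [this]
    rw [Finset.sum_congr rfl (fun j _ => hc j)]
    simp [Finset.card_univ, ZMod.card, mul_comm]
    ring
  have he0 : (0:ℤ) < (e:ℤ) := by
    have := NeZero.pos e; exact_mod_cast this
  have h0 : β 0 = γ 0 := by
    rw [hh] at hsum; simp at hsum
    rcases hsum with h | h
    · omega
    · omega
  exact eq_of_Ew_eq_zero_apply e hE h0

lemma PhiFin_zero_apply {v : ZMod e → ℤ} (hv : v ∈ PhiFin e) : v 0 = 0 := by
  obtain ⟨t, L, ht1, ht2, hL1, hL2, hv⟩ := hv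
  have he : 1 < e := by
    rcases Nat.lt_or_ge e 2 with h | h
    · interval_cases e <;> omega
    · omega
  have key : alphaRoot e (t : ℤ) L 0 = 0 := by
    simp only [alphaRoot, Nat.cast_eq_zero, Finset.card_eq_zero]
    rw [Finset.filter_eq_empty_iff]
    intro k hk
    rw [Finset.mem_range] at hk
    intro hc
    rw [ZMod.intCast_zmod_eq_zero_iff_dvd] at hc
    have h1 : (0:ℤ) < (t:ℤ) + k := by positivity
    have h2 : (t:ℤ) + k < e := by
      have : t + k < e := by omega
      exact_mod_cast this
    have := Int.le_of_dvd h1 hc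
    omega
  rcases hv with rfl | rfl
  · exact key
  · simp [key]

/-- Representative of a residue in `[1, e]`. -/
def repV (i : ZMod e) : ℕ := if i.val = 0 then e else i.val

lemma repV_pos (i : ZMod e) : 1 ≤ repV e i := by
  unfold repV
  split_ifs with h
  · exact Nat.one_le_iff_ne_zero.mpr (NeZero.ne e)
  · omega

lemma repV_le (i : ZMod e) : repV e i ≤ e := by
  unfold repV
  split_ifs with h
  · exact le_rfl
  · exact le_of_lt (ZMod.val_lt i)

lemma repV_cast (i : ZMod e) : ((repV e i : ℕ) : ZMod e) = i := by
  unfold repV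
  split_ifs with h
  · rw [ZMod.natCast_self]
    have : ((i.val : ℕ) : ZMod e) = i := by simp [ZMod.natCast_val, ZMod.cast_id]
    rw [← this, h]; norm_cast
  · simp [ZMod.natCast_val, ZMod.cast_id]

lemma repV_inj {i j : ZMod e} (h : repV e i = repV e j) : i = j := by
  rw [← repV_cast e i, ← repV_cast e j, h]

/-- The finite root `ε_i - ε_j`, as an element of the root lattice. -/
def finRoot (i j : ZMod e) : ZMod e → ℤ :=
  if repV e i < repV e j then alphaRoot e (repV e i) (repV e j - repV e i)
  else -(alphaRoot e (repV e j) (repV e i - repV e j))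

lemma finRoot_mem {i j : ZMod e} (h : i ≠ j) : finRoot e i j ∈ PhiFin e := by
  have hne : repV e i ≠ repV e j := fun hc => h (repV_inj e hc)
  unfold finRoot
  split_ifs with hlt
  · exact ⟨repV e i, repV e j - repV e i, repV_pos e i, by have := repV_le e j; omega,
      by omega, by have := repV_le e j; omega, Or.inl rfl⟩
  · have hlt' : repV e j < repV e i := by omega
    exact ⟨repV e j, repV e i - repV e j, repV_pos e j, by have := repV_le e i; omega,
      by omega, by have := repV_le e i; omega, Or.inr rfl⟩

lemma Ew_finRoot {i j : ZMod e} (h : i ≠ j) :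
    Ew e (finRoot e i j) = chiV e i - chiV e j := by
  have hne : repV e i ≠ repV e j := fun hc => h (repV_inj e hc)
  unfold finRoot
  split_ifs with hlt
  · rw [Ew_alpha]
    have harith : ((repV e i : ℕ) : ℤ) + ((repV e j - repV e i : ℕ) : ℤ)
        = ((repV e j : ℕ) : ℤ) := by omega
    rw [harith]
    have h1 : (((repV e i : ℕ) : ℤ) : ZMod e) = i := by push_cast; exact repV_cast e i
    have h2 : (((repV e j : ℕ) : ℤ) : ZMod e) = j := by push_cast; exact repV_cast e j
    rw [h1, h2]
  · have hlt' : repV e j < repV e i := by omega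
    rw [Ew_neg, Ew_alpha]
    have harith : ((repV e j : ℕ) : ℤ) + ((repV e i - repV e j : ℕ) : ℤ)
        = ((repV e i : ℕ) : ℤ) := by omega
    rw [harith]
    have h1 : (((repV e j : ℕ) : ℤ) : ZMod e) = j := by push_cast; exact repV_cast e j
    have h2 : (((repV e i : ℕ) : ℤ) : ZMod e) = i := by push_cast; exact repV_cast e i
    rw [h1, h2]
    abel

lemma chiV_sub_apply_one {i j m : ZMod e} (hij : i ≠ j) (h : 0 < (chiV e i - chiV e j) m) :
    m = i ∧ (chiV e i - chiV e j) m = 1 := by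
  simp only [chiV, Pi.sub_apply] at h ⊢
  by_cases h1 : i = m
  · subst h1
    have hji : j ≠ i := fun hc => hij hc.symm
    simp [hji]
  · rw [if_neg h1] at h
    exfalso
    split at h <;> omega

/-- Imaginary roots in `PhiPos` are exactly those with `Ew = 0`. -/
lemma imag_iff_Ew {β : ZMod e → ℤ} (hβ : β ∈ PhiPos e) :
    ImaginaryRoot e β ↔ Ew e β = 0 := by
  constructor
  · rintro ⟨m, hm, rfl⟩
    exact Ew_const e m
  · intro h
    obtain ⟨t, L, hL, rfl⟩ := hβ
    rw [Ew_alpha] at h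
    have h1 := congrFun h ((t : ℤ) : ZMod e)
    simp only [chiV, Pi.sub_apply, Pi.zero_apply, eq_self_iff_true, if_true] at h1
    have h2 : ((t + L : ℤ) : ZMod e) = ((t : ℤ) : ZMod e) := by
      by_contra hc
      rw [if_neg hc] at h1
      omega
    have h3 : ((L : ℕ) : ZMod e) = 0 := by
      push_cast at h2
      linear_combination h2
    rw [ZMod.natCast_eq_zero_iff] at h3
    obtain ⟨q, rfl⟩ := h3
    rw [Nat.mul_comm, alphaRoot_mul_e]
    refine ⟨q, Nat.pos_of_ne_zero fun hq => by subst hq; simp at hL, rfl⟩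

/-- Structure of real positive roots. -/
lemma real_struct {β : ZMod e → ℤ} (hβ : β ∈ PhiPos e) (him : ¬ ImaginaryRoot e β) :
    ∃ i j : ZMod e, i ≠ j ∧ Ew e β = chiV e i - chiV e j ∧ pFin e β = finRoot e i j := by
  obtain ⟨t, L, hL, rfl⟩ := hβ
  set β := alphaRoot e t L with hβdef
  refine ⟨((t : ℤ) : ZMod e), ((t + L : ℤ) : ZMod e), ?_, Ew_alpha e t L, ?_⟩
  · intro hc
    apply him
    rw [imag_iff_Ew e ⟨t, L, hL, rfl⟩, Ew_alpha, ← hc]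
    simp
  · have hij : ((t : ℤ) : ZMod e) ≠ ((t + L : ℤ) : ZMod e) := by
      intro hc
      apply him
      rw [imag_iff_Ew e ⟨t, L, hL, rfl⟩, Ew_alpha, ← hc]
      simp
    apply eq_of_Ew_eq_zero_apply e
    · rw [Ew_pFin, Ew_finRoot e hij, Ew_alpha]
    · rw [pFin_zero_apply, PhiFin_zero_apply e (finRoot_mem e hij)]

end Roots
/-- Lexicographic ≥ on sequences of rationals. -/
def LexGE (a b : ℕ → ℚ) : Prop :=
  a = b ∨ ∃ n, (∀ m < n, a m = b m) ∧ b n < a n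

lemma LexGE.refl (a : ℕ → ℚ) : LexGE a a := Or.inl rfl

lemma LexGE.trans {a b c : ℕ → ℚ} (h1 : LexGE a b) (h2 : LexGE b c) : LexGE a c := by
  rcases h1 with rfl | ⟨n, hn, hlt⟩
  · exact h2
  · rcases h2 with rfl | ⟨n', hn', hlt'⟩
    · exact Or.inr ⟨n, hn, hlt⟩
    · rcases lt_trichotomy n n' with h | rfl | h
      · exact Or.inr ⟨n, fun m hm => (hn m hm).trans (hn' m (hm.trans h)), (hn' n h ▸ hlt)⟩
      · exact Or.inr ⟨n, fun m hm => (hn m hm).trans (hn' m hm), hlt'.trans hlt⟩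
      · exact Or.inr ⟨n', fun m hm => (hn m (hm.trans h)).trans (hn' m hm),
          lt_of_lt_of_eq hlt' (hn n' h).symm⟩

lemma LexGE.total (a b : ℕ → ℚ) : LexGE a b ∨ LexGE b a := by
  by_cases h : a = b
  · exact Or.inl (Or.inl h)
  · have hex : ∃ n, a n ≠ b n := by
      by_contra hc
      push_neg at hc
      exact h (funext hc)
    classical
    set n := Nat.find hex with hndef
    have hn : a n ≠ b n := Nat.find_spec hex
    have heq : ∀ m < n, a m = b m := fun m hm => not_not.mp (Nat.find_min hex hm)
    rcases lt_or_gt_of_ne hn with h' | h'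
    · exact Or.inr (Or.inr ⟨n, fun m hm => (heq m hm).symm, h'⟩)
    · exact Or.inl (Or.inr ⟨n, heq, h'⟩)

lemma LexGE.antisymm {a b : ℕ → ℚ} (h1 : LexGE a b) (h2 : LexGE b a) : a = b := by
  rcases h1 with rfl | ⟨n, hn, hlt⟩
  · rfl
  · rcases h2 with h | ⟨n', hn', hlt'⟩
    · exact h.symm
    · rcases lt_trichotomy n n' with h | rfl | h
      · exact absurd (hn' n h) (by linarith)
      · exact absurd hlt' (by linarith)
      · exact absurd (hn n' h) (by linarith)

lemma LexGE.mediant {A B : ℕ → ℚ} {s u : ℚ} (hs : 0 < s) (hu : 0 < u) (h : LexGE A B) :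
    LexGE A (fun n => (s * A n + u * B n) / (s + u)) ∧
    LexGE (fun n => (s * A n + u * B n) / (s + u)) B := by
  have hsu : 0 < s + u := by linarith
  rcases h with rfl | ⟨n, hn, hlt⟩
  · constructor
    · exact Or.inl (funext fun n => by field_simp)
    · exact Or.inl (funext fun n => by field_simp)
  · constructor
    · refine Or.inr ⟨n, fun m hm => by simp only [hn m hm]; field_simp, ?_⟩
      rw [div_lt_iff₀ hsu]; nlinarith
    · refine Or.inr ⟨n, fun m hm => by simp only [hn m hm]; field_simp, ?_⟩
      rw [lt_div_iff₀ hsu]; nlinarith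

section Key
variable (e : ℕ) [NeZero e] (c : ZMod e → ℤ)

/-- The linear functional `F(β) = Σ c_i (Ew β)_i`. -/
def Fc (β : ZMod e → ℤ) : ℤ := ∑ i, c i * Ew e β i

lemma Fc_chi_sub (i j : ZMod e) (β : ZMod e → ℤ) (h : Ew e β = chiV e i - chiV e j) :
    Fc e c β = c i - c j := by
  simp only [Fc, h, chiV, Pi.sub_apply, mul_sub, mul_ite, mul_one, mul_zero]
  rw [Finset.sum_sub_distrib]
  rw [Finset.sum_ite_eq Finset.univ i c, Finset.sum_ite_eq Finset.univ j c]
  simp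

/-- The lexicographic key sequence. -/
def kseq (β : ZMod e → ℤ) : ℕ → ℤ := fun n =>
  match n with
  | 0 => Fc e c β
  | Nat.succ m => Ew e β ((m : ℕ) : ZMod e)

lemma kseq_add (β γ : ZMod e → ℤ) (n : ℕ) :
    kseq e c (β + γ) n = kseq e c β n + kseq e c γ n := by
  match n with
  | 0 =>
    simp only [kseq, Fc, Ew_add, Pi.add_apply, mul_add]
    rw [Finset.sum_add_distrib]
  | Nat.succ m =>
    simp only [kseq, Ew_add, Pi.add_apply]

def keyq (β : ZMod e → ℤ) : ℕ → ℚ := fun n => (kseq e c β n : ℚ) / (htV e β : ℚ)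

lemma keyq_zero_of_Ew_zero {β : ZMod e → ℤ} (h : Ew e β = 0) : keyq e c β = 0 := by
  funext n
  have hk : kseq e c β n = 0 := by
    match n with
    | 0 => simp [kseq, Fc, h]
    | Nat.succ m => simp [kseq, h]
  simp [keyq, hk]

lemma keyq_delta : keyq e c (deltaRoot e) = 0 :=
  keyq_zero_of_Ew_zero e c (by rw [show deltaRoot e = fun _ => (1:ℤ) from rfl, Ew_const])

/-- The convex preorder relation. -/
def relC (β γ : ZMod e → ℤ) : Prop := LexGE (keyq e c β) (keyq e c γ)

end Key

section Main
variable (e : ℕ) [NeZero e] (c : ZMod e → ℤ)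

lemma div_pos_iff' {a b : ℚ} (hb : 0 < b) : 0 < a / b ↔ 0 < a := by
  rw [div_pos_iff]
  constructor
  · rintro (⟨h, _⟩ | ⟨_, h⟩) <;> [exact h; linarith]
  · intro h; exact Or.inl ⟨h, hb⟩

lemma div_neg_iff' {a b : ℚ} (hb : 0 < b) : a / b < 0 ↔ a < 0 := by
  rw [div_neg_iff]
  constructor
  · rintro (⟨_, h⟩ | ⟨h, _⟩) <;> [linarith; exact h]
  · intro h; exact Or.inr ⟨h, hb⟩

lemma chiV_sub_self {i j : ZMod e} (hij : i ≠ j) : (chiV e i - chiV e j) i = 1 := by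
  have hji : j ≠ i := fun hcon => hij hcon.symm
  simp [chiV, hji]

lemma keyq_succ (β : ZMod e → ℤ) (i : ZMod e) :
    keyq e c β (i.val + 1) = (Ew e β i : ℚ) / (htV e β : ℚ) := by
  simp only [keyq, kseq]
  congr 2
  simp [ZMod.natCast_val, ZMod.cast_id]

lemma keyq_eq_iff {β γ : ZMod e → ℤ} (hβ : β ∈ PhiPos e) (hγ : γ ∈ PhiPos e) :
    keyq e c β = keyq e c γ ↔ (β = γ ∨ (ImaginaryRoot e β ∧ ImaginaryRoot e γ)) := by
  have hbp : (0:ℚ) < (htV e β : ℚ) := by exact_mod_cast htV_pos e hβ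
  have hgp : (0:ℚ) < (htV e γ : ℚ) := by exact_mod_cast htV_pos e hγ
  constructor
  · intro h
    have hcomp : ∀ i : ZMod e,
        (Ew e β i : ℚ) / (htV e β : ℚ) = (Ew e γ i : ℚ) / (htV e γ : ℚ) := by
      intro i
      rw [← keyq_succ, ← keyq_succ, h]
    by_cases hEb : Ew e β = 0
    · right
      have hEg : Ew e γ = 0 := by
        funext i
        have := hcomp i
        rw [hEb] at this
        simp only [Pi.zero_apply, Int.cast_zero, zero_div] at this
        have h2 : (Ew e γ i : ℚ) = 0 := by
          field_simp at this
          simpa using this.symm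
        exact_mod_cast h2
      exact ⟨(imag_iff_Ew e hβ).2 hEb, (imag_iff_Ew e hγ).2 hEg⟩
    · left
      have hEg : Ew e γ ≠ 0 := by
        intro h0
        apply hEb
        funext i
        have := hcomp i
        rw [h0] at this
        simp only [Pi.zero_apply, Int.cast_zero, zero_div] at this
        have h2 : (Ew e β i : ℚ) = 0 := by
          field_simp at this
          simpa using this
        exact_mod_cast h2
      obtain ⟨i, j, hij, hEwb, _⟩ := real_struct e hβ (fun h' => hEb ((imag_iff_Ew e hβ).1 h'))
      obtain ⟨i', j', hij', hEwg, _⟩ := real_struct e hγ (fun h' => hEg ((imag_iff_Ew e hγ).1 h'))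
      have hgi' : Ew e γ i' = 1 := by rw [hEwg]; exact chiV_sub_self e hij'
      have hbpos : 0 < Ew e β i' := by
        have h1 : (0:ℚ) < (Ew e β i' : ℚ) / (htV e β : ℚ) := by
          rw [hcomp i', hgi']
          positivity
        have := (div_pos_iff' hbp).1 h1
        exact_mod_cast this
      obtain ⟨hi'i, hb1⟩ := chiV_sub_apply_one e hij (by rw [← hEwb] at *; exact hbpos)
      have hbi' : Ew e β i' = 1 := by rw [hEwb]; exact hb1
      have hht : htV e β = htV e γ := by
        have h1 := hcomp i'
        rw [hgi', hbi'] at h1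
        simp only [Int.cast_one] at h1
        have h2 := (div_eq_div_iff hbp.ne' hgp.ne').1 h1
        have h3 : (htV e β : ℚ) = (htV e γ : ℚ) := by linarith
        exact_mod_cast h3
      have hEweq : Ew e β = Ew e γ := by
        funext m
        have h1 := hcomp m
        rw [hht] at h1
        have h2 : (Ew e β m : ℚ) = (Ew e γ m : ℚ) := by
          field_simp at h1
          exact_mod_cast h1
        exact_mod_cast h2
      exact eq_of_Ew_eq_ht_eq e hEweq hht
  · rintro (rfl | ⟨h1, h2⟩)
    · rfl
    · rw [keyq_zero_of_Ew_zero e c ((imag_iff_Ew e hβ).1 h1),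
        keyq_zero_of_Ew_zero e c ((imag_iff_Ew e hγ).1 h2)]

lemma gt_delta_iff (hc : ∀ i j : ZMod e, i ≠ j → c i ≠ c j) {β : ZMod e → ℤ}
    (hβ : β ∈ PhiPos e) :
    (relC e c β (deltaRoot e) ∧ ¬ relC e c (deltaRoot e) β) ↔ 0 < Fc e c β := by
  have hbp : (0:ℚ) < (htV e β : ℚ) := by exact_mod_cast htV_pos e hβ
  have hkey0 : keyq e c β 0 = (Fc e c β : ℚ) / (htV e β : ℚ) := rfl
  by_cases him : ImaginaryRoot e β
  · have hE := (imag_iff_Ew e hβ).1 him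
    have hkz : keyq e c β = 0 := keyq_zero_of_Ew_zero e c hE
    have hFz : Fc e c β = 0 := by simp [Fc, hE]
    simp only [relC, keyq_delta, hkz, hFz]
    constructor
    · rintro ⟨_, h2⟩; exact absurd (LexGE.refl 0) h2
    · intro h; omega
  · obtain ⟨i, j, hij, hEwb, _⟩ := real_struct e hβ him
    have hF : Fc e c β = c i - c j := Fc_chi_sub e c i j β hEwb
    have hFne : Fc e c β ≠ 0 := by
      rw [hF]; exact sub_ne_zero.2 (hc i j hij)
    simp only [relC, keyq_delta]
    constructor
    · rintro ⟨h1, h2⟩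
      rcases lt_trichotomy (Fc e c β) 0 with hlt | heq | hgt
      · exfalso
        apply h2
        refine Or.inr ⟨0, fun m hm => absurd hm (Nat.not_lt_zero m), ?_⟩
        rw [hkey0]
        rw [Pi.zero_apply]
        exact (div_neg_iff' hbp).2 (by exact_mod_cast hlt)
      · exact absurd heq hFne
      · exact hgt
    · intro hF0
      have hk0pos : 0 < keyq e c β 0 := by
        rw [hkey0]
        exact (div_pos_iff' hbp).2 (by exact_mod_cast hF0)
      constructor
      · exact Or.inr ⟨0, fun m hm => absurd hm (Nat.not_lt_zero m), by
          rw [Pi.zero_apply]; exact hk0pos⟩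
      · rintro (h0 | ⟨n, hm, hlt⟩)
        · rw [← h0] at hk0pos
          simp at hk0pos
        · match n with
          | 0 =>
            rw [Pi.zero_apply] at hlt
            linarith
          | Nat.succ m =>
            have := hm 0 (Nat.succ_pos m)
            rw [Pi.zero_apply] at this
            linarith [this ▸ hk0pos]

lemma lt_delta_iff (hc : ∀ i j : ZMod e, i ≠ j → c i ≠ c j) {β : ZMod e → ℤ}
    (hβ : β ∈ PhiPos e) :
    (relC e c (deltaRoot e) β ∧ ¬ relC e c β (deltaRoot e)) ↔ Fc e c β < 0 := by
  have hbp : (0:ℚ) < (htV e β : ℚ) := by exact_mod_cast htV_pos e hβ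
  have hkey0 : keyq e c β 0 = (Fc e c β : ℚ) / (htV e β : ℚ) := rfl
  by_cases him : ImaginaryRoot e β
  · have hE := (imag_iff_Ew e hβ).1 him
    have hkz : keyq e c β = 0 := keyq_zero_of_Ew_zero e c hE
    have hFz : Fc e c β = 0 := by simp [Fc, hE]
    simp only [relC, keyq_delta, hkz, hFz]
    constructor
    · rintro ⟨_, h2⟩; exact absurd (LexGE.refl 0) h2
    · intro h; omega
  · obtain ⟨i, j, hij, hEwb, _⟩ := real_struct e hβ him
    have hF : Fc e c β = c i - c j := Fc_chi_sub e c i j β hEwb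
    have hFne : Fc e c β ≠ 0 := by
      rw [hF]; exact sub_ne_zero.2 (hc i j hij)
    simp only [relC, keyq_delta]
    constructor
    · rintro ⟨h1, h2⟩
      rcases lt_trichotomy (Fc e c β) 0 with hlt | heq | hgt
      · exact hlt
      · exact absurd heq hFne
      · exfalso
        apply h2
        refine Or.inr ⟨0, fun m hm => absurd hm (Nat.not_lt_zero m), ?_⟩
        rw [hkey0, Pi.zero_apply]
        exact (div_pos_iff' hbp).2 (by exact_mod_cast hgt)
    · intro hF0
      have hk0neg : keyq e c β 0 < 0 := by
        rw [hkey0]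
        exact (div_neg_iff' hbp).2 (by exact_mod_cast hF0)
      constructor
      · exact Or.inr ⟨0, fun m hm => absurd hm (Nat.not_lt_zero m), by
          rw [Pi.zero_apply]; exact hk0neg⟩
      · rintro (h0 | ⟨n, hm, hlt⟩)
        · rw [h0] at hk0neg
          simp at hk0neg
        · match n with
          | 0 =>
            rw [Pi.zero_apply] at hlt
            linarith
          | Nat.succ m =>
            have := hm 0 (Nat.succ_pos m)
            rw [Pi.zero_apply] at this
            linarith [this ▸ hk0neg]

end Main

section Order
open Classical in
/-- The order on residues induced by the positive system. -/
noncomputable def PrecR (e : ℕ) (Pp : Set (ZMod e → ℤ)) (i j : ZMod e) : Prop :=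
  ∃ v ∈ Pp, Ew e v = chiV e i - chiV e j

open Classical in
/-- Rank function of the induced order. -/
noncomputable def cRank (e : ℕ) [NeZero e] (Pp : Set (ZMod e → ℤ)) (i : ZMod e) : ℤ :=
  ((Finset.univ.filter (fun k => PrecR e Pp i k)).card : ℤ)

variable (e : ℕ) [NeZero e] (Pp : Set (ZMod e → ℤ))
variable (hpart : PhiFin e = Pp ∪ {β | -β ∈ Pp})
variable (hdisj : ∀ β ∈ Pp, -β ∉ Pp)
variable (hclosed : ∀ β₁ ∈ Pp, ∀ β₂ ∈ Pp, β₁ + β₂ ∈ PhiFin e → β₁ + β₂ ∈ Pp)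

include hpart in
lemma Pp_sub_fin : ∀ v ∈ Pp, v ∈ PhiFin e := fun v hv => by rw [hpart]; exact Or.inl hv

include hdisj in
lemma zero_not_Pp : (0 : ZMod e → ℤ) ∉ Pp := fun h => hdisj 0 h (by simpa using h)

include hpart hdisj in
lemma PrecR_irrefl : ∀ i, ¬ PrecR e Pp i i := by
  rintro i ⟨v, hv, hEw⟩
  have hE0 : Ew e v = 0 := by rw [hEw]; simp
  have hv0 : v 0 = 0 := PhiFin_zero_apply e (Pp_sub_fin e Pp hpart v hv)
  have hv' : v = 0 := by
    apply eq_of_Ew_eq_zero_apply e (γ := 0)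
    · rw [hE0]; funext m; simp [Ew]
    · simpa using hv0
  exact zero_not_Pp e Pp hdisj (hv' ▸ hv)

include hpart in
lemma PrecR_total : ∀ i j : ZMod e, i ≠ j → PrecR e Pp i j ∨ PrecR e Pp j i := by
  intro i j hij
  have hm := finRoot_mem e hij
  rw [hpart] at hm
  rcases hm with h | h
  · exact Or.inl ⟨_, h, Ew_finRoot e hij⟩
  · refine Or.inr ⟨-(finRoot e i j), h, ?_⟩
    rw [Ew_neg, Ew_finRoot e hij]
    abel

include hpart hdisj in
lemma PrecR_asymm : ∀ i j, PrecR e Pp i j → ¬ PrecR e Pp j i := by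
  rintro i j ⟨v, hv, hEv⟩ ⟨w, hw, hEw⟩
  have hw' : w = -v := by
    apply eq_of_Ew_eq_zero_apply e
    · rw [hEw, Ew_neg, hEv]; abel
    · rw [PhiFin_zero_apply e (Pp_sub_fin e Pp hpart w hw)]
      simp [PhiFin_zero_apply e (Pp_sub_fin e Pp hpart v hv)]
  exact hdisj v hv (hw' ▸ hw)

include hpart hclosed in
lemma PrecR_trans : ∀ i j k, i ≠ k → PrecR e Pp i j → PrecR e Pp j k → PrecR e Pp i k := by
  rintro i j k hik ⟨v, hv, hEv⟩ ⟨w, hw, hEw⟩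
  have hE : Ew e (v + w) = chiV e i - chiV e k := by rw [Ew_add, hEv, hEw]; abel
  have hvw : v + w = finRoot e i k := by
    apply eq_of_Ew_eq_zero_apply e
    · rw [hE, Ew_finRoot e hik]
    · rw [PhiFin_zero_apply e (finRoot_mem e hik)]
      simp [PhiFin_zero_apply e (Pp_sub_fin e Pp hpart v hv),
        PhiFin_zero_apply e (Pp_sub_fin e Pp hpart w hw)]
  exact ⟨v + w, hclosed v hv w hw (hvw ▸ finRoot_mem e hik), hE⟩

include hpart hdisj in
lemma PrecR_ne : ∀ i j, PrecR e Pp i j → i ≠ j := by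
  rintro i j h rfl
  exact PrecR_irrefl e Pp hpart hdisj i h

include hpart hdisj hclosed in
lemma cRank_mono : ∀ i j, PrecR e Pp i j → cRank e Pp j < cRank e Pp i := by
  classical
  intro i j hij
  have hne := PrecR_ne e Pp hpart hdisj i j hij
  have hsubset : (Finset.univ.filter (fun k => PrecR e Pp j k)) ⊆
      (Finset.univ.filter (fun k => PrecR e Pp i k)) := by
    intro k hk
    simp only [Finset.mem_filter, Finset.mem_univ, true_and] at hk ⊢
    have hkne : i ≠ k := fun hc => PrecR_asymm e Pp hpart hdisj i j hij (hc ▸ hk)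
    exact PrecR_trans e Pp hpart hclosed i j k hkne hij hk
  have hss : (Finset.univ.filter (fun k => PrecR e Pp j k)) ⊂
      (Finset.univ.filter (fun k => PrecR e Pp i k)) := by
    rw [Finset.ssubset_iff_of_subset hsubset]
    exact ⟨j, by simp [hij], by simp [PrecR_irrefl e Pp hpart hdisj j]⟩
  have := Finset.card_lt_card hss
  unfold cRank
  exact_mod_cast this

include hpart hdisj hclosed in
lemma cRank_inj : ∀ i j : ZMod e, i ≠ j → cRank e Pp i ≠ cRank e Pp j := by
  intro i j hij
  rcases PrecR_total e Pp hpart i j hij with h | h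
  · have := cRank_mono e Pp hpart hdisj hclosed i j h; omega
  · have := cRank_mono e Pp hpart hdisj hclosed j i h; omega

include hpart hdisj hclosed in
lemma Fc_pos_iff : ∀ β ∈ PhiPos e, (0 < Fc e (cRank e Pp) β ↔ pFin e β ∈ Pp) := by
  intro β hβ
  by_cases him : ImaginaryRoot e β
  · have hE := (imag_iff_Ew e hβ).1 him
    have hFz : Fc e (cRank e Pp) β = 0 := by simp [Fc, hE]
    have hp0 : pFin e β = 0 := by
      obtain ⟨m, hm, rfl⟩ := him
      funext x; simp [pFin]
    rw [hFz, hp0]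
    simp [zero_not_Pp e Pp hdisj]
  · obtain ⟨i, j, hij, hEwb, hpf⟩ := real_struct e hβ him
    have hF : Fc e (cRank e Pp) β = cRank e Pp i - cRank e Pp j :=
      Fc_chi_sub e (cRank e Pp) i j β hEwb
    have hiff1 : 0 < Fc e (cRank e Pp) β ↔ PrecR e Pp i j := by
      rw [hF]
      constructor
      · intro hpos
        rcases PrecR_total e Pp hpart i j hij with h | h
        · exact h
        · have := cRank_mono e Pp hpart hdisj hclosed j i h; omega
      · intro h
        have := cRank_mono e Pp hpart hdisj hclosed i j h; omega
    rw [hiff1]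
    constructor
    · rintro ⟨v, hv, hEv⟩
      have hveq : v = pFin e β := by
        apply eq_of_Ew_eq_zero_apply e
        · rw [hEv, Ew_pFin, hEwb]
        · rw [PhiFin_zero_apply e (Pp_sub_fin e Pp hpart v hv), pFin_zero_apply]
      exact hveq ▸ hv
    · intro h
      exact ⟨pFin e β, h, by rw [Ew_pFin, hEwb]⟩

include hpart hdisj hclosed in
lemma Fc_neg_iff : ∀ β ∈ PhiPos e, (Fc e (cRank e Pp) β < 0 ↔ -pFin e β ∈ Pp) := by
  intro β hβ
  by_cases him : ImaginaryRoot e β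
  · have hE := (imag_iff_Ew e hβ).1 him
    have hFz : Fc e (cRank e Pp) β = 0 := by simp [Fc, hE]
    have hp0 : pFin e β = 0 := by
      obtain ⟨m, hm, rfl⟩ := him
      funext x; simp [pFin]
    rw [hFz, hp0]
    simp [zero_not_Pp e Pp hdisj]
  · obtain ⟨i, j, hij, hEwb, hpf⟩ := real_struct e hβ him
    have hF : Fc e (cRank e Pp) β = cRank e Pp i - cRank e Pp j :=
      Fc_chi_sub e (cRank e Pp) i j β hEwb
    have hiff1 : Fc e (cRank e Pp) β < 0 ↔ PrecR e Pp j i := by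
      rw [hF]
      constructor
      · intro hneg
        rcases PrecR_total e Pp hpart i j hij with h | h
        · have := cRank_mono e Pp hpart hdisj hclosed i j h; omega
        · exact h
      · intro h
        have := cRank_mono e Pp hpart hdisj hclosed j i h; omega
    rw [hiff1]
    constructor
    · rintro ⟨v, hv, hEv⟩
      have hveq : v = -pFin e β := by
        apply eq_of_Ew_eq_zero_apply e
        · rw [hEv, Ew_neg, Ew_pFin, hEwb]; abel
        · rw [PhiFin_zero_apply e (Pp_sub_fin e Pp hpart v hv)]
          simp [pFin_zero_apply]
      exact hveq ▸ hv
    · intro h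
      exact ⟨-pFin e β, h, by rw [Ew_neg, Ew_pFin, hEwb]; abel⟩

end Order

lemma keyq_mediant (e : ℕ) [NeZero e] (c : ZMod e → ℤ) {β γ : ZMod e → ℤ}
    (hβ : β ∈ PhiPos e) (hγ : γ ∈ PhiPos e) :
    keyq e c (β + γ) = fun n =>
      ((htV e β : ℚ) * keyq e c β n + (htV e γ : ℚ) * keyq e c γ n) /
        ((htV e β : ℚ) + (htV e γ : ℚ)) := by
  have hbp : (0:ℚ) < (htV e β : ℚ) := by exact_mod_cast htV_pos e hβ
  have hgp : (0:ℚ) < (htV e γ : ℚ) := by exact_mod_cast htV_pos e hγ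
  funext n
  simp only [keyq, kseq_add, htV_add]
  push_cast
  field_simp


/-- For any positive root system `P₊` of `Φ^fin` there is a convex preorder `≽` on
`Φ₊` with `Φ_{≻δ} = {β ∈ Φ₊ : p(β) ∈ P₊}` and `Φ_{≺δ} = {β ∈ Φ₊ : p(β) ∈ P₋}`. -/
theorem statement13 (e : ℕ) (he : 1 < e) (Pp : Set (ZMod e → ℤ))
    (hpart : PhiFin e = Pp ∪ {β | -β ∈ Pp})
    (hdisj : ∀ β ∈ Pp, -β ∉ Pp)
    (hclosed : ∀ β₁ ∈ Pp, ∀ β₂ ∈ Pp, β₁ + β₂ ∈ PhiFin e → β₁ + β₂ ∈ Pp) :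
    ∃ P : ConvexPreorderOn e,
      ({β | β ∈ PhiPos e ∧ GtRel P β (deltaRoot e)} =
        {β | β ∈ PhiPos e ∧ pFin e β ∈ Pp}) ∧
      ({β | β ∈ PhiPos e ∧ GtRel P (deltaRoot e) β} =
        {β | β ∈ PhiPos e ∧ -pFin e β ∈ Pp}) := by
  haveI : NeZero e := ⟨by omega⟩
  classical
  set c := cRank e Pp with hcdef
  have hc : ∀ i j : ZMod e, i ≠ j → c i ≠ c j := cRank_inj e Pp hpart hdisj hclosed
  refine ⟨⟨relC e c, fun β _ => LexGE.refl _,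
    fun β γ ν _ _ _ h1 h2 => LexGE.trans h1 h2,
    fun β γ _ _ => LexGE.total _ _, ?_, ?_⟩, ?_, ?_⟩
  · -- convexity
    intro β γ hβ hγ hrel _
    have hbp : (0:ℚ) < (htV e β : ℚ) := by exact_mod_cast htV_pos e hβ
    have hgp : (0:ℚ) < (htV e γ : ℚ) := by exact_mod_cast htV_pos e hγ
    obtain ⟨h1, h2⟩ := LexGE.mediant hbp hgp hrel
    constructor
    · show LexGE (keyq e c β) (keyq e c (β + γ))
      rw [keyq_mediant e c hβ hγ]
      exact h1
    · show LexGE (keyq e c (β + γ)) (keyq e c γ)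
      rw [keyq_mediant e c hβ hγ]
      exact h2
  · -- imag_equiv
    intro β γ hβ hγ
    constructor
    · rintro ⟨h1, h2⟩
      exact (keyq_eq_iff e c hβ hγ).1 (LexGE.antisymm h1 h2)
    · intro h
      have heq := (keyq_eq_iff e c hβ hγ).2 h
      exact ⟨Or.inl heq, Or.inl heq.symm⟩
  · -- first set equality
    ext β
    simp only [Set.mem_setOf_eq]
    constructor
    · rintro ⟨hβ, hgt⟩
      refine ⟨hβ, ?_⟩
      have hFpos := (gt_delta_iff e c hc hβ).1 hgt
      exact (Fc_pos_iff e Pp hpart hdisj hclosed β hβ).1 hFpos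
    · rintro ⟨hβ, hmem⟩
      refine ⟨hβ, ?_⟩
      exact (gt_delta_iff e c hc hβ).2
        ((Fc_pos_iff e Pp hpart hdisj hclosed β hβ).2 hmem)
  · -- second set equality
    ext β
    simp only [Set.mem_setOf_eq]
    constructor
    · rintro ⟨hβ, hgt⟩
      refine ⟨hβ, ?_⟩
      have hFneg := (lt_delta_iff e c hc hβ).1 hgt
      exact (Fc_neg_iff e Pp hpart hdisj hclosed β hβ).1 hFneg
    · rintro ⟨hβ, hmem⟩
      refine ⟨hβ, ?_⟩
      exact (lt_delta_iff e c hc hβ).2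
        ((Fc_neg_iff e Pp hpart hdisj hclosed β hβ).2 hmem)
end

section
/- Let θ = (θ_1,…,θ_e) be a residue permutation. For a ∈ [0,e−1], let (φ_a^1,…,φ_a^{a+1}) be the subsequence of (θ_{e−a}, θ_{e−a}−1, θ_{e−a}−2, …, θ_{e−a}−e+1) (entries taken mod e) consisting of those residues equal to some θ_b with b ≥ e−a. Then a (θ,a)-ribbon — the ribbon with a+1 rows whose j-th row consists of the consecutive residues φ_a^{j+1}+1, φ_a^{j+1}+2, …, φ_a^j (mod e) for j ∈ [1,a+1], with the convention φ_a^{a+2} := φ_a^1 — has exactly e nodes and content δ = α_0 + α_1 + ⋯ + α_{e-1}; moreover the (θ,a)-ribbons for a = 0,1,…,e−1 have pairwise distinct shapes (distinct numbers of rows). -/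
/-- The sequence `(φ_a^1, …, φ_a^{a+1})`: the subsequence of
`(θ_{e−a}, θ_{e−a}−1, …, θ_{e−a}−e+1)` (mod `e`) consisting of those residues equal
to some `θ_b` with `b ≥ e−a`. Here `θ` is a residue permutation, indexed by
`[1,e]` with values in `[0,e−1]`. -/
def phiList (e : ℕ) (θ : ℕ → ℕ) (a : ℕ) : List ℕ :=
  ((List.range e).map (fun j => (θ (e - a) + e - j) % e)).filter
    (fun x => decide (x ∈ (Finset.Icc (e - a) e).image θ))

/-- `φ_a^{j+1}` (0-indexed access to `phiList`). -/
def phiIdx (e : ℕ) (θ : ℕ → ℕ) (a : ℕ) (j : ℕ) : ℕ :=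
  (phiList e θ a).getD j 0

/-- The length of the `(i+1)`-st row (from the top) of the `(θ,a)`-ribbon:
`(φ^{i+1} − φ^{i+2}) mod e` taken in `[1,e]`, with cyclic convention
`φ^{a+2} = φ^1`. -/
def rowLen (e : ℕ) (θ : ℕ → ℕ) (a : ℕ) (i : ℕ) : ℕ :=
  (phiIdx e θ a i + e - 1 - phiIdx e θ a ((i + 1) % (a + 1))) % e + 1

/- ### auxiliary lemmas -/

lemma aux_toFinset_range (e : ℕ) : (List.range e).toFinset = Finset.range e := by
  ext x; simp

lemma aux_alphaRoot_congr {e : ℕ} {t t' : ℤ} (h : t % e = t' % e) (L : ℕ) :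
    alphaRoot e t L = alphaRoot e t' L := by
  have h' : ((t : ZMod e)) = ((t' : ZMod e)) :=
    (ZMod.intCast_eq_intCast_iff _ _ _).2 h
  funext j
  unfold alphaRoot
  congr 2
  apply Finset.filter_congr
  intro k _
  simp only [Int.cast_add, h']

lemma aux_alphaRoot_zero (e : ℕ) (t : ℤ) : alphaRoot e t 0 = 0 := by
  funext j; simp [alphaRoot]

lemma aux_alphaRoot_succ (e : ℕ) (t : ℤ) (L : ℕ) :
    alphaRoot e t (L + 1) = alphaRoot e t L + alphaRoot e (t + L) 1 := by
  funext j
  simp only [alphaRoot, Pi.add_apply, Finset.range_add_one, Finset.filter_insert,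
    Finset.range_one, Finset.filter_singleton, Nat.cast_zero, add_zero]
  by_cases h : ((t + (L : ℤ) : ℤ) : ZMod e) = j
  · rw [if_pos h, if_pos h, Finset.card_insert_of_notMem (fun hm => by
      have := (Finset.mem_filter.1 hm).1
      simp at this)]
    simp
  · rw [if_neg h, if_neg h]
    simp

lemma aux_alphaRoot_add (e : ℕ) (t : ℤ) (L L' : ℕ) :
    alphaRoot e t (L + L') = alphaRoot e t L + alphaRoot e (t + L) L' := by
  induction L' with
  | zero => simp [aux_alphaRoot_zero]
  | succ n ih =>
      rw [← add_assoc, aux_alphaRoot_succ, ih, aux_alphaRoot_succ e (t + L) n, add_assoc]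
      congr 2
      push_cast; ring

lemma aux_alphaRoot_full (e : ℕ) (he : 0 < e) (t : ℤ) : alphaRoot e t e = deltaRoot e := by
  haveI : NeZero e := ⟨by omega⟩
  funext j
  unfold alphaRoot deltaRoot
  norm_num
  rw [Finset.card_eq_one]
  refine ⟨(j - (t : ZMod e)).val, ?_⟩
  ext k
  simp only [Finset.mem_filter, Finset.mem_range, Finset.mem_singleton]
  constructor
  · rintro ⟨hk, hj⟩
    have hk' : ((k : ℕ) : ZMod e) = j - (t : ZMod e) := by
      linear_combination hj
    rw [← hk', ZMod.val_cast_of_lt hk]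
  · rintro rfl
    refine ⟨ZMod.val_lt _, ?_⟩
    rw [ZMod.natCast_rightInverse _]
    ring

lemma aux_emod_sub_left (a b n : ℤ) : (a % n - b) % n = (a - b) % n := by
  rw [Int.sub_emod, Int.emod_emod_of_dvd _ dvd_rfl, ← Int.sub_emod]

lemma aux_emod_sub_right (a b n : ℤ) : (a - b % n) % n = (a - b) % n := by
  rw [Int.sub_emod, Int.emod_emod_of_dvd _ dvd_rfl, ← Int.sub_emod]

/-- key modular identity for row lengths -/
lemma aux_mod_helper (e : ℕ) (he : 0 < e) (x y T : ℕ) (hy : y < e) (hT1 : 1 ≤ T) (hT2 : T ≤ e)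
    (hcong : ((x : ℤ) - y) % e = (T : ℤ) % e) :
    (x + e - 1 - y) % e + 1 = T := by
  set R : ℕ := (x + e - 1 - y) % e + 1 with hR
  have hRlt : (x + e - 1 - y) % e < e := Nat.mod_lt _ he
  have hcast : (((x + e - 1 - y) % e : ℕ) : ℤ) = ((x : ℤ) + e - 1 - y) % e := by
    rw [Int.natCast_mod]
    congr 1
    omega
  have h2 : ((R : ℤ)) % e = ((x : ℤ) - y) % e := by
    have hRc : (R : ℤ) = ((x : ℤ) + e - 1 - y) % e + 1 := by
      rw [hR]; push_cast [hcast]; ring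
    rw [hRc, Int.emod_add_emod]
    have h3 : (x : ℤ) + e - 1 - y + 1 = ((x : ℤ) - y) + e * 1 := by ring
    rw [h3, Int.add_mul_emod_self_left]
  have hdvd : (e : ℤ) ∣ ((T : ℤ) - R) := by
    have : ((R : ℤ)) % e = ((T : ℤ)) % e := by rw [h2, hcong]
    exact Int.ModEq.dvd this
  have h0 : (T : ℤ) - R = 0 := Int.eq_zero_of_abs_lt_dvd hdvd (by
    have hR1 : 1 ≤ R := by omega
    have hR2 : R ≤ e := by omega
    rw [abs_lt]
    constructor <;> push_cast <;> omega)
  omega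

lemma aux_phiList_length (e : ℕ) (he : 1 < e) (θ : ℕ → ℕ)
    (hθ : Set.BijOn θ (Set.Icc 1 e) (Set.Iio e)) (a : ℕ) (ha : a < e) :
    (phiList e θ a).length = a + 1 := by
  have hs : θ (e - a) < e := hθ.mapsTo ⟨by omega, by omega⟩
  set s := θ (e - a) with hsdef
  set S := (Finset.Icc (e - a) e).image θ with hS
  set f : ℕ → ℕ := fun j => (s + e - j) % e with hf
  have hinj : ∀ j < e, ∀ j' < e, f j = f j' → j = j' := by
    intro j hj j' hj' h
    haveI : NeZero e := ⟨by omega⟩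
    have h1 : ((s + e - j : ℕ) : ZMod e) = ((s + e - j' : ℕ) : ZMod e) := by
      have := congrArg (fun x : ℕ => (x : ZMod e)) h
      simpa [hf, ZMod.natCast_mod] using this
    have hc1 : ((s + e - j : ℕ) : ZMod e) = ((s : ZMod e) + e) - (j : ZMod e) := by
      rw [Nat.cast_sub (by omega : j ≤ s + e)]; push_cast; ring
    have hc2 : ((s + e - j' : ℕ) : ZMod e) = ((s : ZMod e) + e) - (j' : ZMod e) := by
      rw [Nat.cast_sub (by omega : j' ≤ s + e)]; push_cast; ring
    have h2 : ((j : ZMod e)) = (j' : ZMod e) := by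
      rw [hc1, hc2] at h1
      exact sub_right_inj.1 h1
    have := congrArg ZMod.val h2
    rwa [ZMod.val_cast_of_lt hj, ZMod.val_cast_of_lt hj'] at this
  have hnd : ((List.range e).map f).Nodup := by
    refine List.Nodup.map_on ?_ (List.nodup_range (n := e))
    intro xx hx yy hy h
    exact hinj xx (List.mem_range.1 hx) yy (List.mem_range.1 hy) h
  have htf : ((List.range e).map f).toFinset = Finset.range e := by
    apply Finset.eq_of_subset_of_card_le
    · intro x hx
      rw [List.mem_toFinset, List.mem_map] at hx
      obtain ⟨j, _, rfl⟩ := hx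
      exact Finset.mem_range.2 (Nat.mod_lt _ (by omega))
    · rw [List.toFinset_card_of_nodup hnd]
      simp
  have hperm : ((List.range e).map f).Perm (List.range e) :=
    List.perm_of_nodup_nodup_toFinset_eq hnd (List.nodup_range (n := e))
      (by rw [htf, aux_toFinset_range])
  have hlen1 : (phiList e θ a).length
      = ((List.range e).filter (fun x => decide (x ∈ S))).length := by
    rw [phiList, ← List.countP_eq_length_filter, ← List.countP_eq_length_filter]
    exact hperm.countP_eq _
  rw [hlen1]
  have hnd2 : ((List.range e).filter (fun x => decide (x ∈ S))).Nodup :=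
    (List.nodup_range (n := e)).filter _
  rw [← List.toFinset_card_of_nodup hnd2, List.toFinset_filter, aux_toFinset_range]
  have hsub : S ⊆ Finset.range e := by
    intro x hx
    rw [hS, Finset.mem_image] at hx
    obtain ⟨b, hb, rfl⟩ := hx
    rw [Finset.mem_Icc] at hb
    exact Finset.mem_range.2 (hθ.mapsTo ⟨by omega, by omega⟩)
  have hfil : (Finset.range e).filter (fun x => decide (x ∈ S) = true) = S := by
    have heq : (Finset.range e).filter (fun x => decide (x ∈ S) = true)
        = (Finset.range e).filter (fun x => x ∈ S) := by
      apply Finset.filter_congr; intro x _; simp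
    rw [heq, Finset.filter_mem_eq_inter, Finset.inter_eq_right.2 hsub]
  rw [hfil, hS, Finset.card_image_of_injOn, Nat.card_Icc]
  · omega
  · intro x hx y hy hxy
    rw [Finset.mem_coe, Finset.mem_Icc] at hx hy
    exact hθ.injOn ⟨by omega, by omega⟩ ⟨by omega, by omega⟩ hxy

/-- The `(θ,a)`-ribbon has `a+1` rows (row `j` consisting of the consecutive
residues `φ^{j+1}+1, …, φ^j`), exactly `e` nodes in total, content `δ`, and the
`(θ,a)`-ribbons for distinct `a` have distinct numbers of rows. -/
theorem statement17 (e : ℕ) (he : 1 < e) (θ : ℕ → ℕ)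
    (hθ : Set.BijOn θ (Set.Icc 1 e) (Set.Iio e)) (a : ℕ) (ha : a < e) :
    ((phiList e θ a).length = a + 1) ∧
    ((∑ i ∈ Finset.range (a + 1), rowLen e θ a i) = e) ∧
    ((∑ i ∈ Finset.range (a + 1),
        alphaRoot e ((phiIdx e θ a ((i + 1) % (a + 1)) : ℤ) + 1) (rowLen e θ a i)) =
      deltaRoot e) ∧
    (∀ a' : ℕ, a' < e → a ≠ a' →
      (phiList e θ a).length ≠ (phiList e θ a').length) := by
  have he0 : 0 < e := by omega
  have hs : θ (e - a) < e := hθ.mapsTo ⟨by omega, by omega⟩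
  set s := θ (e - a) with hsdef
  set S := (Finset.Icc (e - a) e).image θ with hS
  set f : ℕ → ℕ := fun j => (s + e - j) % e with hf
  set J : List ℕ := (List.range e).filter (fun j => decide (f j ∈ S)) with hJ
  have hPL : phiList e θ a = J.map f := by
    rw [phiList, hJ, List.filter_map]
    rfl
  have hlen : (phiList e θ a).length = a + 1 := aux_phiList_length e he θ hθ a ha
  have hJlen : J.length = a + 1 := by
    have h := hlen
    rwa [hPL, List.length_map] at h
  set g : ℕ → ℕ := fun i => J.getD i 0 with hg
  have hg_get : ∀ i, ∀ h : i < J.length, g i = J.get ⟨i, h⟩ := by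
    intro i h
    exact List.getD_eq_getElem J 0 h
  have hφ : ∀ i ≤ a, phiIdx e θ a i = f (g i) := by
    intro i hi
    have h1 : i < J.length := by omega
    rw [phiIdx, hPL, List.getD_eq_getElem _ _ (by rw [List.length_map]; omega),
      List.getElem_map, hg_get i h1]
    rfl
  have hmemJ : ∀ x ∈ J, x < e := by
    intro x hx
    rw [hJ, List.mem_filter] at hx
    exact List.mem_range.1 hx.1
  have hg_lt : ∀ i ≤ a, g i < e := by
    intro i hi
    rw [hg_get i (by omega)]
    exact hmemJ _ (List.get_mem _ _)
  have hpw : List.Pairwise (· < ·) J := (List.pairwise_lt_range (n := e)).filter _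
  have hg_mono : ∀ i < a, g i < g (i + 1) := by
    intro i hi
    rw [hg_get i (by omega), hg_get (i + 1) (by omega)]
    exact List.pairwise_iff_get.1 hpw ⟨i, by omega⟩ ⟨i + 1, by omega⟩
      (Fin.mk_lt_mk.2 (by omega))
  have hf0 : f 0 = s := by
    show (s + e - 0) % e = s
    rw [Nat.sub_zero, Nat.add_mod_right, Nat.mod_eq_of_lt hs]
  have hsS : s ∈ S := by
    rw [hS, Finset.mem_image]
    exact ⟨e - a, Finset.mem_Icc.2 ⟨le_refl _, by omega⟩, rfl⟩
  have hg0 : g 0 = 0 := by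
    have h0mem : 0 ∈ J := by
      rw [hJ, List.mem_filter]
      refine ⟨List.mem_range.2 (by omega), by simp [hf0, hsS]⟩
    obtain ⟨⟨kv, hkv⟩, hk⟩ := List.mem_iff_get.1 h0mem
    rcases Nat.eq_zero_or_pos kv with h0 | h0
    · subst h0
      rw [hg_get 0 (by omega)]
      exact hk
    · exfalso
      have hlt := List.pairwise_iff_get.1 hpw ⟨0, by omega⟩ ⟨kv, hkv⟩
        (Fin.mk_lt_mk.2 (by omega))
      rw [hk] at hlt
      omega
  have hfcast : ∀ u ≤ e, ((f u : ℕ) : ℤ) = ((s : ℤ) + e - u) % e := by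
    intro u hu
    show (((s + e - u) % e : ℕ) : ℤ) = _
    rw [Int.natCast_mod]
    congr 1
    omega
  -- row length identities
  have hrow : ∀ i < a, rowLen e θ a i = g (i + 1) - g i := by
    intro i hi
    have hmod : (i + 1) % (a + 1) = i + 1 := Nat.mod_eq_of_lt (by omega)
    have hmo := hg_mono i hi
    have hl1 := hg_lt (i + 1) (by omega)
    have hl0 := hg_lt i (by omega)
    simp only [rowLen, hmod, hφ i (by omega), hφ (i + 1) (by omega)]
    refine aux_mod_helper e he0 _ _ _ (by rw [hf]; exact Nat.mod_lt _ he0)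
      (by omega) (by omega) ?_
    rw [hfcast (g i) (by omega), hfcast (g (i + 1)) (by omega),
      aux_emod_sub_left, aux_emod_sub_right]
    congr 1
    omega
  have hrowa : rowLen e θ a a = e - g a := by
    have hla := hg_lt a le_rfl
    simp only [rowLen, Nat.mod_self, hφ a le_rfl, hφ 0 (by omega), hg0, hf0]
    refine aux_mod_helper e he0 _ _ _ hs (by omega) (by omega) ?_
    rw [hfcast (g a) (by omega), aux_emod_sub_left]
    congr 1
    omega
  -- part 2
  have hpart2 : (∑ i ∈ Finset.range (a + 1), rowLen e θ a i) = e := by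
    have hz : ((∑ i ∈ Finset.range (a + 1), rowLen e θ a i : ℕ) : ℤ) = (e : ℤ) := by
      rw [Nat.cast_sum, Finset.sum_range_succ]
      have hterm : ∀ i ∈ Finset.range a, ((rowLen e θ a i : ℕ) : ℤ)
          = (fun i => (g (min i a) : ℤ)) (i + 1) - (fun i => (g (min i a) : ℤ)) i := by
        intro i hi
        rw [Finset.mem_range] at hi
        simp only []
        rw [min_eq_left (by omega), min_eq_left (by omega), hrow i hi]
        have := hg_mono i hi
        omega
      rw [Finset.sum_congr rfl hterm, Finset.sum_range_sub (fun i => (g (min i a) : ℤ))]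
      simp only [min_self]
      rw [show min 0 a = 0 by omega, hg0, hrowa]
      have := hg_lt a le_rfl
      omega
    exact_mod_cast hz
  -- part 3
  have hpart3 : (∑ i ∈ Finset.range (a + 1),
      alphaRoot e ((phiIdx e θ a ((i + 1) % (a + 1)) : ℤ) + 1) (rowLen e θ a i)) =
      deltaRoot e := by
    set A : ℕ → ZMod e → ℤ := fun i =>
      alphaRoot e ((phiIdx e θ a ((i + 1) % (a + 1)) : ℤ) + 1) (rowLen e θ a i) with hA
    have claim : ∀ m, 1 ≤ m → m ≤ a + 1 →
        (∑ i ∈ Finset.range m, A (a - i)) = alphaRoot e ((s : ℤ) + 1) (e - g (a + 1 - m)) := by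
      intro m
      induction m with
      | zero => intro h1 _; exact absurd h1 (by omega)
      | succ m ih =>
        intro _ hm1
        rcases Nat.eq_zero_or_pos m with rfl | hm
        · rw [Finset.sum_range_one]
          simp only [hA, Nat.sub_zero, Nat.mod_self, Nat.add_sub_cancel]
          rw [hφ 0 (by omega), hg0, hf0, hrowa]
        · rw [Finset.sum_range_succ, ih (by omega) (by omega)]
          have him : a - m < a := by omega
          have hmod : (a - m + 1) % (a + 1) = a - m + 1 := Nat.mod_eq_of_lt (by omega)
          have hidx : a - m + 1 = a + 1 - m := by omega
          have hGlt : g (a + 1 - m) < e := hg_lt _ (by omega)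
          have hGmono : g (a - m) < g (a + 1 - m) := by
            have h := hg_mono (a - m) him
            rwa [hidx] at h
          simp only [hA]
          rw [hmod, hidx, hφ (a + 1 - m) (by omega), hrow (a - m) him, hidx]
          have hsplit : e - g (a - m)
              = (e - g (a + 1 - m)) + (g (a + 1 - m) - g (a - m)) := by omega
          rw [show a + 1 - (m + 1) = a - m by omega, hsplit, aux_alphaRoot_add]
          congr 1
          apply aux_alphaRoot_congr
          rw [hfcast (g (a + 1 - m)) (by omega), Int.emod_add_emod]
          congr 1
          omega
    have hfinal := claim (a + 1) (by omega) (le_refl _)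
    rw [Nat.sub_self, hg0, Nat.sub_zero, aux_alphaRoot_full e he0] at hfinal
    calc (∑ i ∈ Finset.range (a + 1), A i)
        = ∑ i ∈ Finset.range (a + 1), A (a + 1 - 1 - i) := (Finset.sum_range_reflect A (a + 1)).symm
      _ = ∑ i ∈ Finset.range (a + 1), A (a - i) := by simp only [Nat.add_sub_cancel]
      _ = deltaRoot e := hfinal
  refine ⟨hlen, hpart2, hpart3, ?_⟩
  intro a' ha' hne
  rw [hlen, aux_phiList_length e he θ hθ a' ha']
  omega
end
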